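/- Let U ⊆ ℤ ∖ {0} be a finite set with |U| = k, let n ≥ 1 be an integer, let ε > 0, and let p be a prime such that |u| < p^ε for every u ∈ U. Then g_{n,U}(p) ≥ (2p^ε)^{-n} · G'_U(p^n). -/

import Mathlib

/-- `G'U U M` : the minimum cardinality of a finite set `B ⊆ ℤ` containing a `U`-pattern
`{x + r·u : u ∈ U}` (with `r ≠ 0`) for `M` distinct integer basepoints `x`. -/
noncomputable def G'U (U : Finset ℤ) (M : ℕ) : ℕ :=
  sInf { m | ∃ B : Finset ℤ, B.card = m ∧ ∃ X : Finset ℤ, X.card = M ∧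
    ∀ x ∈ X, ∃ r : ℤ, r ≠ 0 ∧ ∀ u ∈ U, x + r * u ∈ B }

/-- `gnU U n p` : the minimum cardinality of a set `A ⊆ 𝔽_p^n` containing a `U`-pattern
`{x + ū·r : u ∈ U}` (with `r ≠ 0`) with basepoint `x`, for every `x ∈ 𝔽_p^n`. -/
noncomputable def gnU (U : Finset ℤ) (n p : ℕ) : ℕ :=
  sInf { m | ∃ A : Finset (Fin n → ZMod p), A.card = m ∧
    ∀ x : Fin n → ZMod p, ∃ r : Fin n → ZMod p, r ≠ 0 ∧
      ∀ u ∈ U, x + (u : ZMod p) • r ∈ A }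

/-- If all digits are `< p` in absolute value and the base-`p` expansion vanishes,
then all digits vanish. -/
private lemma digitsZero : ∀ (n : ℕ) (p : ℕ) (c : Fin n → ℤ), 1 ≤ p →
    (∀ i, |c i| < (p : ℤ)) → (∑ i, c i * (p : ℤ) ^ (i : ℕ)) = 0 → ∀ i, c i = 0 := by
  intro n
  induction n with
  | zero => intro p c _ _ _ i; exact i.elim0
  | succ n ih =>
    intro p c hp hc hs
    have hp0 : (p : ℤ) ≠ 0 := by exact_mod_cast Nat.one_le_iff_ne_zero.mp hp
    have hsplit : (∑ i : Fin (n+1), c i * (p : ℤ) ^ (i : ℕ))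
        = c 0 + (p : ℤ) * ∑ i : Fin n, c i.succ * (p : ℤ) ^ (i : ℕ) := by
      rw [Fin.sum_univ_succ, Finset.mul_sum]
      congr 1
      · simp
      · refine Finset.sum_congr rfl fun i _ => ?_
        rw [Fin.val_succ, pow_succ]; ring
    rw [hsplit] at hs
    have h0 : c 0 = 0 := by
      refine Int.eq_zero_of_abs_lt_dvd ⟨-(∑ i : Fin n, c i.succ * (p : ℤ) ^ (i : ℕ)), by linarith⟩ (hc 0)
    have hS : (∑ i : Fin n, c i.succ * (p : ℤ) ^ (i : ℕ)) = 0 := by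
      rw [h0, zero_add] at hs
      exact (mul_eq_zero.mp hs).resolve_left hp0
    have hrest := ih p (fun i => c i.succ) hp (fun i => hc i.succ) hS
    intro i
    exact Fin.cases h0 hrest i

/-- Counting integers in a fixed residue class in an interval. -/
private lemma Dcard (p M K : ℕ) (hp : 0 < p) (hK : 2 * K ≤ M * p) (t : ZMod p) :
    ((Finset.Icc (-(K : ℤ)) ((p : ℤ) - 1 + K)).filter (fun d : ℤ => (d : ZMod p) = t)).card
      ≤ M + 1 := by
  classical
  have hpZ : (0 : ℤ) < p := by exact_mod_cast hp
  have hKZ : 2 * (K : ℤ) ≤ (M : ℤ) * p := by exact_mod_cast hK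
  have hcard : (Finset.Icc (0 : ℤ) (M : ℤ)).card = M + 1 := by
    rw [Int.card_Icc]; simp
  rw [← hcard]
  apply Finset.card_le_card_of_injOn (fun d : ℤ => (d + (K:ℤ)) / (p:ℤ))
  · intro d hd
    rw [Finset.mem_coe, Finset.mem_filter, Finset.mem_Icc] at hd
    rw [Finset.mem_coe, Finset.mem_Icc]
    constructor
    · exact Int.ediv_nonneg (by linarith [hd.1.1]) (le_of_lt hpZ)
    · have : (d + K) / p < (M : ℤ) + 1 := by
        rw [Int.ediv_lt_iff_lt_mul hpZ]
        have := hd.1.2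
        nlinarith
      show (d + K) / p ≤ (M : ℤ)
      omega
  · intro a ha b hb hab
    simp only [Finset.coe_filter, Set.mem_setOf_eq, Finset.mem_Icc] at ha hb
    have hdvd : (p : ℤ) ∣ b - a := by
      have : ((b - a : ℤ) : ZMod p) = 0 := by push_cast [ha.2, hb.2]; ring
      exact (ZMod.intCast_zmod_eq_zero_iff_dvd _ _).mp this
    have hmod : (a + K) % p = (b + K) % p :=
      Int.ModEq.add_right _ ((Int.modEq_iff_dvd).mpr hdvd)
    simp only at hab
    have h1 := Int.mul_ediv_add_emod (a + K) p
    have h2 := Int.mul_ediv_add_emod (b + K) p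
    rw [hab] at h1
    omega

/-- Let `U ⊆ ℤ ∖ {0}` with `|U| = k`, let `n ≥ 1`, `ε > 0`, and let `p` be a prime with
`|u| < p^ε` for all `u ∈ U`. Then `g_{n,U}(p) ≥ (2p^ε)^{-n} · G'_U(p^n)`. -/
theorem stmt18 (p : ℕ) (hp : p.Prime) (U : Finset ℤ) (k : ℕ) (hcard : U.card = k)
    (h0 : (0 : ℤ) ∉ U) (n : ℕ) (hn : 1 ≤ n) (ε : ℝ) (hε : 0 < ε)
    (hU : ∀ u ∈ U, (|u| : ℝ) < (p : ℝ) ^ ε) :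
    ((2 * (p : ℝ) ^ ε) ^ n)⁻¹ * (G'U U (p ^ n) : ℝ) ≤ (gnU U n p : ℝ) := by
  classical
  haveI : Fact p.Prime := ⟨hp⟩
  haveI : NeZero p := ⟨hp.pos.ne'⟩
  have hp0 : 0 < p := hp.pos
  have hrpow : (0 : ℝ) < (p : ℝ) ^ ε := Real.rpow_pos_of_pos (by exact_mod_cast hp0) ε
  have hbpos : (0 : ℝ) < (2 * (p : ℝ) ^ ε) ^ n := by positivity
  rw [inv_mul_le_iff₀ hbpos]
  by_cases hUe : U = ∅
  · have hG0 : G'U U (p ^ n) = 0 := by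
      apply Nat.le_antisymm _ (Nat.zero_le _)
      apply Nat.sInf_le
      refine ⟨∅, Finset.card_empty, (Finset.range (p ^ n)).image (Nat.cast), ?_, ?_⟩
      · rw [Finset.card_image_of_injective _ Nat.cast_injective, Finset.card_range]
      · intro x _
        exact ⟨1, one_ne_zero, by simp [hUe]⟩
    rw [hG0]
    push_cast
    positivity
  have hUne : U.Nonempty := Finset.nonempty_iff_ne_empty.mpr hUe
  -- M = max |u|
  set M : ℕ := U.sup Int.natAbs with hMdef
  have hMle : ∀ u ∈ U, |u| ≤ (M : ℤ) := by
    intro u hu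
    have := Finset.le_sup (f := Int.natAbs) hu
    rw [Int.abs_eq_natAbs]
    exact_mod_cast this
  have hM1 : 1 ≤ M := by
    obtain ⟨u, hu⟩ := hUne
    have h1 : u ≠ 0 := fun h => h0 (h ▸ hu)
    have := Finset.le_sup (f := Int.natAbs) hu
    omega
  have hMlt : (M : ℝ) < (p : ℝ) ^ ε := by
    obtain ⟨u, hu, hsup⟩ := Finset.exists_mem_eq_sup U hUne Int.natAbs
    rw [hMdef, hsup]
    calc (u.natAbs : ℝ) = |(u : ℝ)| := by rw [Nat.cast_natAbs, Int.cast_abs]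
      _ < (p : ℝ) ^ ε := hU u hu
  set K : ℕ := (M * p) / 2 with hKdef
  have hK : 2 * K ≤ M * p ∧ M * p ≤ 2 * K + 1 := by
    have := Nat.div_add_mod (M * p) 2
    omega
  -- the optimal A for gnU
  have hgmem : gnU U n p ∈ { m | ∃ A : Finset (Fin n → ZMod p), A.card = m ∧
      ∀ x : Fin n → ZMod p, ∃ r : Fin n → ZMod p, r ≠ 0 ∧
        ∀ u ∈ U, x + (u : ZMod p) • r ∈ A } := by
    apply Nat.sInf_mem
    refine ⟨Finset.univ.card, Finset.univ, rfl, fun x => ⟨fun _ => 1, ?_, fun u _ => Finset.mem_univ _⟩⟩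
    intro h
    exact one_ne_zero (congrFun h ⟨0, hn⟩)
  obtain ⟨A, hAcard, hA⟩ := hgmem
  -- the residue-class fibers
  set D : ZMod p → Finset ℤ :=
    fun t => (Finset.Icc (-(K : ℤ)) ((p : ℤ) - 1 + K)).filter (fun d : ℤ => (d : ZMod p) = t)
    with hDdef
  set B : Finset ℤ := A.biUnion (fun a =>
    (Fintype.piFinset (fun i => D (a i))).image
      (fun d : Fin n → ℤ => ∑ i : Fin n, d i * (p : ℤ) ^ (i : ℕ))) with hBdef
  set φ : (Fin n → ZMod p) → ℤ := fun v => ∑ i : Fin n, ((v i).val : ℤ) * (p : ℤ) ^ (i : ℕ)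
    with hφdef
  have hφinj : Function.Injective φ := by
    intro v w h
    have hzero : ∀ i : Fin n, (((v i).val : ℤ) - ((w i).val : ℤ)) = 0 := by
      apply digitsZero n p _ hp0
      · intro i
        have h1 := ZMod.val_lt (v i)
        have h2 := ZMod.val_lt (w i)
        rw [abs_sub_lt_iff]
        constructor <;> push_cast <;> omega
      · have heq : (∑ i : Fin n, (((v i).val : ℤ) - ((w i).val : ℤ)) * (p : ℤ) ^ (i : ℕ))
            = φ v - φ w := by
          simp only [hφdef]
          rw [← Finset.sum_sub_distrib]
          exact Finset.sum_congr rfl fun i _ => by ring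
        rw [heq, h, sub_self]
    funext i
    apply ZMod.val_injective p
    have := hzero i
    omega
  set X : Finset ℤ := Finset.univ.image φ with hXdef
  have hXcard : X.card = p ^ n := by
    rw [hXdef, Finset.card_image_of_injective _ hφinj, Finset.card_univ,
      Fintype.card_fun, ZMod.card, Fintype.card_fin]
  -- key covering property
  have hmain : ∀ x ∈ X, ∃ r : ℤ, r ≠ 0 ∧ ∀ u ∈ U, x + r * u ∈ B := by
    intro x hx
    obtain ⟨v, -, rfl⟩ := Finset.mem_image.mp hx
    obtain ⟨r, hr0, hrA⟩ := hA v
    set c : Fin n → ℤ := fun i =>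
      if 2 * (r i).val ≤ p then ((r i).val : ℤ) else ((r i).val : ℤ) - p with hcdef
    have hcCast : ∀ i, ((c i : ZMod p)) = r i := by
      intro i
      by_cases hsp : 2 * (r i).val ≤ p
      · have : c i = ((r i).val : ℤ) := by simp only [hcdef, if_pos hsp]
        rw [this]
        push_cast
        exact ZMod.natCast_rightInverse (r i)
      · have : c i = ((r i).val : ℤ) - p := by simp only [hcdef, if_neg hsp]
        rw [this]
        push_cast
        rw [ZMod.natCast_self]
        simpa using ZMod.natCast_rightInverse (r i)
    have hc2 : ∀ i, 2 * |c i| ≤ (p : ℤ) := by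
      intro i
      have hvlt := ZMod.val_lt (r i)
      by_cases hsp : 2 * (r i).val ≤ p
      · have hci : c i = ((r i).val : ℤ) := by simp only [hcdef, if_pos hsp]
        rw [hci, abs_of_nonneg (by positivity)]
        omega
      · have hci : c i = ((r i).val : ℤ) - p := by simp only [hcdef, if_neg hsp]
        rw [hci, abs_of_nonpos (by omega)]
        omega
    have hclt : ∀ i, |c i| < (p : ℤ) := by
      intro i
      have h1 := hc2 i
      have h2 : (0:ℤ) ≤ |c i| := abs_nonneg _
      omega
    have hrint : (∑ i : Fin n, c i * (p : ℤ) ^ (i : ℕ)) ≠ 0 := by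
      intro h
      obtain ⟨i0, hi0⟩ := Function.ne_iff.mp hr0
      apply hi0
      have hz := digitsZero n p c hp0 hclt h i0
      rw [← hcCast i0, hz]
      simp
    refine ⟨∑ i : Fin n, c i * (p : ℤ) ^ (i : ℕ), hrint, fun u hu => ?_⟩
    have huM : |u| ≤ (M : ℤ) := hMle u hu
    rw [hBdef, Finset.mem_biUnion]
    refine ⟨v + (u : ZMod p) • r, hrA u hu, ?_⟩
    rw [Finset.mem_image]
    refine ⟨fun i => ((v i).val : ℤ) + c i * u, ?_, ?_⟩
    · rw [Fintype.mem_piFinset]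
      intro i
      simp only [hDdef, Finset.mem_filter, Finset.mem_Icc]
      have hcu : |c i * u| ≤ (K : ℤ) := by
        have h1 : 2 * |c i * u| ≤ (M : ℤ) * p := by
          rw [abs_mul]
          calc 2 * (|c i| * |u|) = (2 * |c i|) * |u| := by ring
            _ ≤ (p : ℤ) * M :=
              mul_le_mul (hc2 i) huM (abs_nonneg _) (by positivity)
            _ = (M : ℤ) * p := by ring
        have h2 : (M : ℤ) * p ≤ 2 * K + 1 := by exact_mod_cast hK.2
        omega
      have hvlt := ZMod.val_lt (v i)
      have habs := abs_le.mp hcu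
      refine ⟨⟨by omega, by omega⟩, ?_⟩
      push_cast
      rw [hcCast i, ZMod.natCast_rightInverse (v i)]
      simp [mul_comm]
    · show (∑ i : Fin n, (((v i).val : ℤ) + c i * u) * (p : ℤ) ^ (i : ℕ))
          = φ v + (∑ i : Fin n, c i * (p : ℤ) ^ (i : ℕ)) * u
      simp only [hφdef]
      rw [Finset.sum_mul, ← Finset.sum_add_distrib]
      exact Finset.sum_congr rfl fun i _ => by ring
  have hG' : G'U U (p ^ n) ≤ B.card := Nat.sInf_le ⟨B, rfl, X, hXcard, hmain⟩
  have hBcard : B.card ≤ gnU U n p * (M + 1) ^ n := by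
    rw [hBdef]
    calc (A.biUnion _).card ≤ ∑ a ∈ A, ((Fintype.piFinset (fun i => D (a i))).image
          (fun d : Fin n → ℤ => ∑ i : Fin n, d i * (p : ℤ) ^ (i : ℕ))).card :=
        Finset.card_biUnion_le
      _ ≤ ∑ _a ∈ A, (M + 1) ^ n := by
          apply Finset.sum_le_sum
          intro a _
          calc ((Fintype.piFinset (fun i => D (a i))).image _).card
              ≤ (Fintype.piFinset (fun i => D (a i))).card := Finset.card_image_le
            _ = ∏ i, (D (a i)).card := Fintype.card_piFinset _
            _ ≤ ∏ _i : Fin n, (M + 1) := Finset.prod_le_prod' fun i _ => by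
                simp only [hDdef]; exact Dcard p M K hp0 hK.1 (a i)
            _ = (M + 1) ^ n := by rw [Finset.prod_const, Finset.card_univ, Fintype.card_fin]
      _ = A.card * (M + 1) ^ n := by rw [Finset.sum_const, smul_eq_mul]
      _ = gnU U n p * (M + 1) ^ n := by rw [hAcard]
  -- put it together over ℝ
  have hstep : ((M : ℝ) + 1) ≤ 2 * (p : ℝ) ^ ε := by
    have h1 : (1 : ℝ) ≤ (M : ℝ) := by exact_mod_cast hM1
    nlinarith
  calc (G'U U (p ^ n) : ℝ) ≤ (gnU U n p : ℝ) * ((M : ℝ) + 1) ^ n := by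
        have h1 : (G'U U (p ^ n) : ℝ) ≤ ((gnU U n p * (M + 1) ^ n : ℕ) : ℝ) := by
          exact_mod_cast le_trans hG' hBcard
        push_cast at h1
        exact h1
    _ ≤ (gnU U n p : ℝ) * (2 * (p : ℝ) ^ ε) ^ n := by
        apply mul_le_mul_of_nonneg_left _ (Nat.cast_nonneg _)
        exact pow_le_pow_left₀ (by positivity) hstep n
    _ = (2 * (p : ℝ) ^ ε) ^ n * (gnU U n p : ℝ) := mul_comm _ _
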